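/- Let L be a finite bounded lattice with more than two elements, and x with 0 < x < 1 such that x is comparable to every atom and every coatom of L. Let y be an atom of L with y ≠ x. Then in the lattice L \ {y}, the element x is below every coatom of L \ {y}, and hence x has no complement in L \ {y}. -/

import Mathlib

open scoped Classical

/-- In L' = L \ {y} (y an atom), meets are given by x ⊓' z = ⊥ if x ⊓ z = y and
x ⊓ z otherwise, while joins are those of L; coatoms of L' are the elements b ≠ y
with b < ⊤ maximal in L'.  If x is comparable to all atoms and coatoms of L, then
x is below every coatom of L' and x has no complement in L'. -/
theorem stmt_5 {L : Type*} [Lattice L] [Fintype L] [BoundedOrder L]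
    (hcard : 2 < Fintype.card L)
    (x : L) (hx : ⊥ < x) (hx' : x < ⊤)
    (hcompA : ∀ a : L, IsAtom a → a ≤ x ∨ x ≤ a)
    (hcompB : ∀ b : L, IsCoatom b → x ≤ b ∨ b ≤ x)
    (y : L) (hy : IsAtom y) (hyx : y ≠ x) :
    (∀ b : L, b ≠ y → b ≠ ⊤ → (∀ c : L, c ≠ y → b < c → c = ⊤) → x ≤ b) ∧
    ¬ ∃ z : L, z ≠ y ∧ (if x ⊓ z = y then (⊥ : L) else x ⊓ z) = ⊥ ∧ x ⊔ z = ⊤ := by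
  have key : ∀ b : L, b ≠ y → b ≠ ⊤ → (∀ c : L, c ≠ y → b < c → c = ⊤) → x ≤ b := by
    intro b hby hbt hmax
    by_cases hb0 : b = ⊥
    · -- then x would be a counterexample to maximality
      exfalso
      have := hmax x (fun h => hyx h.symm) (hb0 ▸ hx)
      exact hx'.ne this
    · -- b is a coatom of L
      have hcoatom : IsCoatom b := by
        constructor
        · exact hbt
        · intro c hbc
          by_cases hcy : c = y
          · exfalso
            subst hcy
            exact hb0 (hy.lt_iff.mp hbc)
          · exact hmax c hcy hbc
      rcases hcompB b hcoatom with h | h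
      · exact h
      · rcases eq_or_lt_of_le h with h | h
        · exact le_of_eq h.symm
        · exact absurd (hcoatom.2 x h) hx'.ne
  refine ⟨key, ?_⟩
  rintro ⟨z, hzy, hmeet, hjoin⟩
  have hzt : z ≠ ⊤ := by
    rintro rfl
    rw [inf_top_eq] at hmeet
    by_cases h : x = y
    · exact hyx h.symm
    · rw [if_neg h] at hmeet
      exact hx.ne' hmeet
  -- find a maximal element of {b | z ≤ b ∧ b ≠ ⊤ ∧ b ≠ y}
  classical
  set s : Finset L := Finset.univ.filter (fun b => z ≤ b ∧ b ≠ ⊤ ∧ b ≠ y) with hs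
  have hzs : z ∈ s := by
    simp [hs, hzy, hzt]
  obtain ⟨b, hbs, hbmax⟩ := s.exists_maximal ⟨z, hzs⟩
  simp only [hs, Finset.mem_filter, Finset.mem_univ, true_and] at hbs
  obtain ⟨hzb, hbt, hby⟩ := hbs
  have hxb : x ≤ b := by
    apply key b hby hbt
    intro c hcy hbc
    by_contra hct
    have hcs : c ∈ s := by
      simp [hs, hct, hcy, le_trans hzb hbc.le]
    exact lt_irrefl _ (lt_of_lt_of_le hbc (hbmax hcs hbc.le))
  have : (⊤ : L) ≤ b := hjoin ▸ sup_le hxb hzb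
  exact hbt (top_le_iff.mp this)
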